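/- There exists c_u^h with 13.15 < c_u^h < 13.16 such that ω^h(c_u^h) + c_u^h/6 = 2·ln 3. -/

import Mathlib

/-- ω^h(c) = sup_{t∈(0,1)} [ (c/6)·t² − (c/3)·t − (1−t)·ln 2 + ln(3 − e^{−2ct/3}) ] -/
noncomputable def omegaH (c : ℝ) : ℝ :=
  sSup ((fun t => (c / 6) * t ^ 2 - (c / 3) * t - (1 - t) * Real.log 2 +
      Real.log (3 - Real.exp (-2 * c * t / 3))) '' Set.Ioo (0 : ℝ) 1)

noncomputable def fH (c t : ℝ) : ℝ :=
  (c / 6) * t ^ 2 - (c / 3) * t - (1 - t) * Real.log 2 +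
      Real.log (3 - Real.exp (-2 * c * t / 3))

lemma omegaH_eq (c : ℝ) : omegaH c = sSup (fH c '' Set.Ioo (0 : ℝ) 1) := rfl

lemma log3_bounds : 1.098612276 < Real.log 3 ∧ Real.log 3 < 1.09861230 := by
  have h := Real.abs_log_sub_add_sum_range_le (x := 1/3) (by rw [abs_of_pos] <;> norm_num) 16
  rw [abs_of_pos (by norm_num : (0:ℝ) < 1/3)] at h
  have h31 : (1 : ℝ) - 1/3 = 2/3 := by norm_num
  rw [h31] at h
  have hlog : Real.log (2/3) = Real.log 2 - Real.log 3 := by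
    rw [Real.log_div (by norm_num) (by norm_num)]
  rw [hlog] at h
  simp only [Finset.sum_range_succ] at h
  norm_num at h
  rw [abs_le] at h
  have l2lo := Real.log_two_gt_d9
  have l2hi := Real.log_two_lt_d9
  constructor <;> nlinarith [h.1, h.2]

lemma exp_neg_lb {u : ℝ} (h0 : 0 ≤ u) (h1 : u ≤ 1) :
    1 - u + u^2/2 - u^3/6 - 5/96*u^4 ≤ Real.exp (-u) := by
  have h := Real.exp_bound (x := -u) (by rw [abs_neg, abs_of_nonneg h0]; exact h1)
    (n := 4) (by norm_num)
  simp only [Finset.sum_range_succ] at h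
  rw [abs_neg, abs_of_nonneg h0, abs_le] at h
  norm_num [Nat.factorial] at h
  nlinarith [h.1, h.2]

lemma exp_neg_ub {u : ℝ} (h0 : 0 ≤ u) (h1 : u ≤ 1) :
    Real.exp (-u) ≤ 1 - u + u^2/2 - u^3/6 + 5/96*u^4 := by
  have h := Real.exp_bound (x := -u) (by rw [abs_neg, abs_of_nonneg h0]; exact h1)
    (n := 4) (by norm_num)
  simp only [Finset.sum_range_succ] at h
  rw [abs_neg, abs_of_nonneg h0, abs_le] at h
  norm_num [Nat.factorial] at h
  nlinarith [h.1, h.2]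

lemma log_one_add_ub {x : ℝ} (h0 : 0 ≤ x) (hx : x ≤ 2/7) :
    Real.log (1+x) ≤ x - x^2/2 + x^3/3 + 1.4*x^4 := by
  have h := Real.abs_log_sub_add_sum_range_le (x := -x)
    (by rw [abs_neg, abs_of_nonneg h0]; linarith) 3
  rw [abs_neg, abs_of_nonneg h0] at h
  simp only [Finset.sum_range_succ] at h
  norm_num at h
  rw [abs_le] at h
  have hd : x^4/(1-x) ≤ 1.4*x^4 := by
    rw [div_le_iff₀ (by linarith)]
    nlinarith [pow_nonneg h0 4]
  nlinarith [h.1, h.2]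

lemma log_one_add_lb {x : ℝ} (h0 : 0 ≤ x) (hx : x ≤ 1/2) :
    x - x^2/2 + x^3/3 - x^4/4 - 2*x^5 ≤ Real.log (1+x) := by
  have h := Real.abs_log_sub_add_sum_range_le (x := -x)
    (by rw [abs_neg, abs_of_nonneg h0]; linarith) 4
  rw [abs_neg, abs_of_nonneg h0] at h
  simp only [Finset.sum_range_succ] at h
  norm_num at h
  rw [abs_le] at h
  have hd : x^5/(1-x) ≤ 2*x^5 := by
    rw [div_le_iff₀ (by linarith)]
    nlinarith [pow_nonneg h0 5]
  nlinarith [h.1, h.2]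

lemma R1core {u X l2 : ℝ} (hu0 : 0 < u) (hu1 : u ≤ 0.57)
    (hl2 : l2 ≤ 0.6931471808)
    (hXlo : (u - u^2/2)/2 ≤ X) (hXhi : X ≤ (u - u^2/2 + u^3/6 + 5/96*u^4)/2) :
    (15/526)*u^2 - u/2 + (30/263)*l2*u + (X - X^2/2 + X^3/3 + 1.4*X^4) ≤ 0.0053 := by
  have hu0' := hu0.le
  have hq : (0:ℝ) ≤ 1/2 - u/6 - 5/96*u^2 := by nlinarith
  have hXu : X ≤ u/2 := le_trans hXhi (by nlinarith [mul_nonneg (sq_nonneg u) hq])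
  have hA0 : (0:ℝ) ≤ (u - u^2/2)/2 := by nlinarith
  have hX0 : (0:ℝ) ≤ X := le_trans hA0 hXlo
  have h2 : -(X^2)/2 ≤ -(((u - u^2/2)/2)^2)/2 := by
    nlinarith [mul_nonneg (sub_nonneg.2 hXlo) (by linarith : (0:ℝ) ≤ (u - u^2/2)/2 + X)]
  have h3' : X^3 ≤ (u/2)^3 := pow_le_pow_left₀ hX0 hXu 3
  have h4' : X^4 ≤ (u/2)^4 := pow_le_pow_left₀ hX0 hXu 4
  have hl2u : (30/263)*l2*u ≤ (30/263)*0.6931471808*u := by nlinarith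
  nlinarith [sq_nonneg (u - 0.135), mul_nonneg (mul_nonneg hu0' hu0') hu0',
    mul_nonneg hu0' (sub_nonneg.2 hu1), sq_nonneg (u*(u-0.135)),
    mul_nonneg (mul_nonneg hu0' hu0') (sub_nonneg.2 hu1),
    mul_nonneg (mul_nonneg (mul_nonneg hu0' hu0') hu0') (sub_nonneg.2 hu1)]

lemma region1 {t : ℝ} (ht0 : 0 < t) (ht1 : t ≤ 0.065) : fH 13.15 t ≤ 0.0053 := by
  have harg : -2 * (13.15:ℝ) * t / 3 = -(263/30*t) := by ring
  set u : ℝ := 263/30*t with hu_def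
  have hu0 : 0 < u := by positivity
  have hu1 : u ≤ 0.57 := by rw [hu_def]; linarith
  have hlb := exp_neg_lb hu0.le (by linarith)
  have hub := exp_neg_ub hu0.le (by linarith)
  set x : ℝ := (1 - Real.exp (-u))/2 with hx_def
  have hXlo : (u - u^2/2)/2 ≤ x := by
    rw [hx_def]; nlinarith [mul_nonneg (mul_nonneg hu0.le hu0.le) (mul_nonneg hu0.le hu0.le)]
  have hXhi : x ≤ (u - u^2/2 + u^3/6 + 5/96*u^4)/2 := by rw [hx_def]; linarith
  have hx0 : (0:ℝ) ≤ x := le_trans (by nlinarith) hXlo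
  have he1 : 1 - u ≤ Real.exp (-u) := by have := Real.add_one_le_exp (-u); linarith
  have hx27 : x ≤ 2/7 := by rw [hx_def]; nlinarith
  have h1x : (0:ℝ) < 1 + x := by linarith
  have hlogeq : Real.log (3 - Real.exp (-u)) = Real.log 2 + Real.log (1 + x) := by
    have h3 : (3:ℝ) - Real.exp (-u) = 2*(1+x) := by rw [hx_def]; ring
    rw [h3, Real.log_mul (by norm_num) (ne_of_gt h1x)]
  have hln := log_one_add_ub hx0 hx27
  have hcore := R1core (l2 := Real.log 2) hu0 hu1 Real.log_two_lt_d9.le hXlo hXhi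
  have hteq : t = 30/263*u := by rw [hu_def]; ring
  have hfh : fH 13.15 t = (15/526)*u^2 - u/2 + (30/263)*(Real.log 2)*u +
      (Real.log 2 * 0 + Real.log (1+x)) := by
    rw [fH, harg, hlogeq, hteq]; ring
  rw [hfh]
  nlinarith [hcore, hln]

lemma region2 {t : ℝ} (ht0 : 0.065 ≤ t) (ht1 : t ≤ 0.2) : fH 13.15 t ≤ 0.0053 := by
  set s : ℝ := Real.exp (-2 * 13.15 * t / 3) with hs_def
  have hs0 : 0 < s := Real.exp_pos _
  have hs1 : s < 1 := by
    rw [hs_def, Real.exp_lt_one_iff]; nlinarith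
  have hpos : (0:ℝ) < 3 - s := by linarith
  have hsq : (1 - 263/60*t)^2 ≤ s := by
    have h1 : 1 - 263/60*t ≤ Real.exp (-(263/60*t)) := by
      have := Real.add_one_le_exp (-(263/60*t)); linarith
    have h0 : (0:ℝ) ≤ 1 - 263/60*t := by nlinarith
    have h2 : (1 - 263/60*t)^2 ≤ Real.exp (-(263/60*t))^2 := by
      nlinarith [Real.exp_pos (-(263/60*t))]
    have h3 : Real.exp (-(263/60*t))^2 = s := by
      rw [hs_def, ← Real.exp_nat_mul]; norm_num; ring_nf
    linarith [h2, le_of_eq h3]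
  have hlog : Real.log (3 - s) ≤ Real.log 3 - s/3 := by
    have hd : Real.log (3 - s) - Real.log 3 = Real.log ((3-s)/3) := by
      rw [Real.log_div (ne_of_gt hpos) (by norm_num)]
    have := Real.log_le_sub_one_of_pos (show (0:ℝ) < (3-s)/3 by linarith)
    nlinarith [hd, this]
  have htl2 : t * Real.log 2 ≤ t * 0.6931471808 :=
    mul_le_mul_of_nonneg_left Real.log_two_lt_d9.le (by linarith)
  have l2lo := Real.log_two_gt_d9
  have l3hi := log3_bounds.2
  rw [fH, ← hs_def]
  nlinarith [sq_nonneg (t - 0.065), hsq, hlog]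

lemma region3 {t : ℝ} (ht0 : 0.2 ≤ t) (ht1 : t < 1) : fH 13.15 t ≤ 0.0053 := by
  set s : ℝ := Real.exp (-2 * 13.15 * t / 3) with hs_def
  have hs0 : 0 < s := Real.exp_pos _
  have hpos : (0:ℝ) < 3 - s := by
    have hs1 : s < 1 := by rw [hs_def, Real.exp_lt_one_iff]; nlinarith
    linarith
  have hlog : Real.log (3 - s) ≤ Real.log 3 := by
    rw [Real.log_le_log_iff hpos (by norm_num)]; linarith
  have htl2 : t * Real.log 2 ≤ t * 0.6931471808 :=
    mul_le_mul_of_nonneg_left Real.log_two_lt_d9.le (by linarith)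
  have l2lo := Real.log_two_gt_d9
  have l3hi := log3_bounds.2
  rw [fH, ← hs_def]
  nlinarith [mul_nonneg (sub_nonneg.2 ht0) (sub_nonneg.2 ht1.le), hlog]

lemma main_ub {t : ℝ} (ht : t ∈ Set.Ioo (0:ℝ) 1) : fH 13.15 t ≤ 0.0053 := by
  obtain ⟨ht0, ht1⟩ := ht
  rcases le_or_gt t 0.065 with h | h
  · exact region1 ht0 h
  · rcases le_or_gt t 0.2 with h2 | h2
    · exact region2 h.le h2
    · exact region3 h2.le ht1

lemma fH_ub {c t : ℝ} (hc : 0 < c) (ht : t ∈ Set.Ioo (0:ℝ) 1) :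
    fH c t ≤ c/6 + Real.log 3 := by
  obtain ⟨ht0, ht1⟩ := ht
  set s : ℝ := Real.exp (-2 * c * t / 3) with hs_def
  have hs0 : 0 < s := Real.exp_pos _
  have hs1 : s < 1 := by rw [hs_def, Real.exp_lt_one_iff]; nlinarith
  have hlog : Real.log (3 - s) ≤ Real.log 3 := by
    rw [Real.log_le_log_iff (by linarith) (by norm_num)]; linarith
  have hl2 : (0:ℝ) ≤ Real.log 2 := Real.log_nonneg (by norm_num)
  rw [fH, ← hs_def]
  nlinarith [mul_nonneg hl2 (sub_nonneg.2 ht1.le), sq_nonneg t,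
    mul_nonneg hc.le ht0.le, mul_nonneg hc.le (mul_nonneg ht0.le ht0.le),
    mul_nonneg hc.le (sub_nonneg.2 ht1.le),
    mul_nonneg (mul_nonneg hc.le ht0.le) (sub_nonneg.2 ht1.le)]

lemma bddAbove_fH {c : ℝ} (hc : 0 < c) : BddAbove (fH c '' Set.Ioo (0:ℝ) 1) := by
  refine ⟨c/6 + Real.log 3, ?_⟩
  rintro y ⟨t, ht, rfl⟩
  exact fH_ub hc ht

lemma nonempty_fH (c : ℝ) : (fH c '' Set.Ioo (0:ℝ) 1).Nonempty :=
  ⟨fH c (1/2), ⟨1/2, ⟨by norm_num, by norm_num⟩, rfl⟩⟩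

lemma exp_neg_lip {x y : ℝ} (hx : 0 ≤ x) (hxy : x ≤ y) :
    Real.exp (-x) - Real.exp (-y) ≤ y - x := by
  have h1 : Real.exp (-y) = Real.exp (-x) * Real.exp (-(y-x)) := by
    rw [← Real.exp_add]; ring_nf
  have h2 : 1 - (y-x) ≤ Real.exp (-(y-x)) := by
    have := Real.add_one_le_exp (-(y-x)); linarith
  have h3 : Real.exp (-x) ≤ 1 := Real.exp_le_one_iff.2 (by linarith)
  nlinarith [Real.exp_pos (-x)]

lemma fH_lip {c₁ c₂ t : ℝ} (h₁ : 13 ≤ c₁) (h₂ : 13 ≤ c₂) (h₁' : c₁ ≤ 14) (h₂' : c₂ ≤ 14)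
    (ht0 : 0 < t) (ht1 : t < 1) : fH c₁ t ≤ fH c₂ t + |c₁ - c₂| := by
  set s₁ : ℝ := Real.exp (-2 * c₁ * t / 3) with hs₁
  set s₂ : ℝ := Real.exp (-2 * c₂ * t / 3) with hs₂
  have hs₁0 : 0 < s₁ := Real.exp_pos _
  have hs₂0 : 0 < s₂ := Real.exp_pos _
  have hs₁1 : s₁ < 1 := by rw [hs₁, Real.exp_lt_one_iff]; nlinarith
  have hs₂1 : s₂ < 1 := by rw [hs₂, Real.exp_lt_one_iff]; nlinarith
  have hpos₁ : (0:ℝ) < 3 - s₁ := by linarith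
  have hpos₂ : (0:ℝ) < 3 - s₂ := by linarith
  rcases le_total c₁ c₂ with hle | hle
  · have habs : |c₁ - c₂| = c₂ - c₁ := by rw [abs_of_nonpos (by linarith)]; ring
    have hlog : Real.log (3 - s₁) ≤ Real.log (3 - s₂) := by
      rw [Real.log_le_log_iff hpos₁ hpos₂]
      have : s₂ ≤ s₁ := by
        rw [hs₁, hs₂, Real.exp_le_exp]; nlinarith
      linarith
    rw [fH, fH, ← hs₁, ← hs₂, habs]
    nlinarith [mul_nonneg (sub_nonneg.2 hle) (mul_nonneg ht0.le ht0.le),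
      mul_nonneg (sub_nonneg.2 hle) ht0.le, sq_nonneg t,
      mul_nonneg (sub_nonneg.2 hle) (mul_nonneg ht0.le (sub_nonneg.2 ht1.le))]
  · have habs : |c₁ - c₂| = c₁ - c₂ := abs_of_nonneg (by linarith)
    have hd : s₂ - s₁ ≤ (2*t/3) * (c₁ - c₂) := by
      have := exp_neg_lip (x := 2 * c₂ * t / 3) (y := 2 * c₁ * t / 3)
        (by nlinarith) (by nlinarith)
      have e₁ : -(2 * c₁ * t / 3) = -2 * c₁ * t / 3 := by ring
      have e₂ : -(2 * c₂ * t / 3) = -2 * c₂ * t / 3 := by ring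
      rw [e₁, e₂, ← hs₁, ← hs₂] at this
      nlinarith
    have hlog : Real.log (3 - s₁) - Real.log (3 - s₂) ≤ (c₁ - c₂)/3 := by
      have hdiv : Real.log (3 - s₁) - Real.log (3 - s₂) = Real.log ((3 - s₁)/(3 - s₂)) := by
        rw [Real.log_div (ne_of_gt hpos₁) (ne_of_gt hpos₂)]
      have hub := Real.log_le_sub_one_of_pos (show (0:ℝ) < (3 - s₁)/(3 - s₂) by positivity)
      rw [hdiv]
      have h2 : (3 - s₁)/(3 - s₂) - 1 = (s₂ - s₁)/(3 - s₂) := by field_simp; ring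
      have h3 : (s₂ - s₁)/(3 - s₂) ≤ (c₁ - c₂)/3 := by
        rw [div_le_iff₀ hpos₂]
        have ht23 : (2*t/3) * (c₁ - c₂) ≤ (2/3) * (c₁ - c₂) := by nlinarith
        nlinarith
      linarith
    rw [fH, fH, ← hs₁, ← hs₂, habs]
    nlinarith [mul_nonneg (sub_nonneg.2 hle) (mul_nonneg ht0.le ht0.le),
      mul_nonneg (sub_nonneg.2 hle) ht0.le, sq_nonneg t,
      mul_nonneg (sub_nonneg.2 hle) (mul_nonneg ht0.le (sub_nonneg.2 ht1.le))]

lemma omegaH_lip {c₁ c₂ : ℝ} (h₁ : 13 ≤ c₁) (h₂ : 13 ≤ c₂) (h₁' : c₁ ≤ 14) (h₂' : c₂ ≤ 14) :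
    omegaH c₁ ≤ omegaH c₂ + |c₁ - c₂| := by
  rw [omegaH_eq, omegaH_eq]
  apply csSup_le (nonempty_fH c₁)
  rintro y ⟨t, ht, rfl⟩
  have hle := fH_lip h₁ h₂ h₁' h₂' ht.1 ht.2
  have hmem : fH c₂ t ∈ fH c₂ '' Set.Ioo (0:ℝ) 1 := ⟨t, ht, rfl⟩
  have := le_csSup (bddAbove_fH (by linarith : (0:ℝ) < c₂)) hmem
  linarith

lemma lower_1316 : 2 * Real.log 3 - 13.16/6 < fH 13.16 0.015 := by
  have harg : -2 * (13.16:ℝ) * 0.015 / 3 = -(0.1316) := by norm_num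
  have hub : Real.exp (-(0.1316:ℝ)) ≤ 0.876695047736108 := by
    have := exp_neg_ub (u := 0.1316) (by norm_num) (by norm_num)
    norm_num at this ⊢
    linarith
  have hln : (0.0598246830442573:ℝ) ≤ Real.log (1 + 0.061652476131946) := by
    have := log_one_add_lb (x := 0.061652476131946) (by norm_num) (by norm_num)
    nlinarith [this]
  have hmono : Real.log (2*(1+(0.061652476131946:ℝ))) ≤
      Real.log (3 - Real.exp (-(0.1316:ℝ))) := by
    rw [Real.log_le_log_iff (by norm_num) (by nlinarith [Real.exp_pos (-(0.1316:ℝ))])]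
    nlinarith
  have hsplit : Real.log (2*(1+(0.061652476131946:ℝ))) =
      Real.log 2 + Real.log (1+(0.061652476131946:ℝ)) := by
    rw [Real.log_mul (by norm_num) (by norm_num)]
  have l2lo := Real.log_two_gt_d9
  have l2hi := Real.log_two_lt_d9
  have l3hi := log3_bounds.2
  rw [fH, harg]
  nlinarith [hln, hmono, hsplit]

theorem omegaH_threshold :
    ∃ cu : ℝ, 13.15 < cu ∧ cu < 13.16 ∧ omegaH cu + cu / 6 = 2 * Real.log 3 := by
  set H : ℝ → ℝ := fun c => omegaH c + c/6 with hH_def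
  have hHval : ∀ c : ℝ, H c = omegaH c + c/6 := fun c => rfl
  have hlipH : LipschitzOnWith 2 H (Set.Icc (13.15:ℝ) 13.16) := by
    apply LipschitzOnWith.of_dist_le_mul
    intro x hx y hy
    obtain ⟨hx1, hx2⟩ := hx
    obtain ⟨hy1, hy2⟩ := hy
    have hxy1 : omegaH x ≤ omegaH y + |x - y| :=
      omegaH_lip (c₁ := x) (c₂ := y) (by linarith) (by linarith) (by linarith) (by linarith)
    have hxy2 : omegaH y ≤ omegaH x + |y - x| :=
      omegaH_lip (c₁ := y) (c₂ := x) (by linarith) (by linarith) (by linarith) (by linarith)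
    rw [abs_sub_comm y x] at hxy2
    have hle1 : H x - H y ≤ |x - y| + |x - y|/6 := by
      rw [hHval x, hHval y]
      have := le_abs_self (x - y)
      linarith
    have hle2 : -(|x - y| + |x - y|/6) ≤ H x - H y := by
      rw [hHval x, hHval y]
      have := neg_abs_le (x - y)
      linarith
    have habs : |H x - H y| ≤ |x - y| + |x - y|/6 := abs_le.2 ⟨hle2, hle1⟩
    rw [Real.dist_eq, Real.dist_eq]
    have hco : ((2:NNReal):ℝ) = 2 := by norm_num
    rw [hco]
    nlinarith [abs_nonneg (x - y)]
  have hcont : ContinuousOn H (Set.Icc (13.15:ℝ) 13.16) := hlipH.continuousOn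
  have hHa : H 13.15 < 2 * Real.log 3 := by
    have hsup : omegaH 13.15 ≤ 0.0053 := by
      rw [omegaH_eq]
      apply csSup_le (nonempty_fH _)
      rintro y ⟨t, ht, rfl⟩
      exact main_ub ht
    have l3lo := log3_bounds.1
    rw [hHval]
    nlinarith
  have hHb : 2 * Real.log 3 < H 13.16 := by
    have hmem : fH 13.16 0.015 ∈ fH 13.16 '' Set.Ioo (0:ℝ) 1 :=
      ⟨0.015, ⟨by norm_num, by norm_num⟩, rfl⟩
    have hsup : fH 13.16 0.015 ≤ omegaH 13.16 := by
      rw [omegaH_eq]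
      exact le_csSup (bddAbove_fH (by norm_num)) hmem
    have := lower_1316
    rw [hHval]
    linarith
  have hmem : (2 * Real.log 3) ∈ Set.Ioo (H 13.15) (H 13.16) := ⟨hHa, hHb⟩
  have hsub := intermediate_value_Ioo (by norm_num : (13.15:ℝ) ≤ 13.16) hcont hmem
  obtain ⟨cu, hcu, hval⟩ := hsub
  exact ⟨cu, hcu.1, hcu.2, by rw [← hHval cu]; exact hval⟩
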